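/- arXiv:0704.0965 — 3 statements merged into one kernel-verified Lean document; each statement's English description precedes it below -/
import Mathlib

section
/- A normalized n-partite amplitude tensor a is separable if and only if for every party k, det(M_k * M_kᴴ − 1) = 0, where M_kᴴ is the conjugate transpose of the k-th flattening M_k and 1 denotes the identity matrix of the same size as M_k * M_kᴴ. -/
open Matrix

noncomputable section

/-- Insert `j` at position `k` into the partial index tuple `I`, producing a full index tuple. -/
def insertAt {n : ℕ} {d : Fin n → ℕ} (k : Fin n)
    (I : ∀ s : {s : Fin n // s ≠ k}, Fin (d s)) (j : Fin (d k)) :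
    ∀ t : Fin n, Fin (d t) :=
  fun t => if h : t = k then Fin.cast (congrArg d h).symm j else I ⟨t, h⟩

/-- The `k`-th flattening of an `n`-partite amplitude tensor `a`. -/
def flatten {n : ℕ} {d : Fin n → ℕ} (a : (∀ t : Fin n, Fin (d t)) → ℂ) (k : Fin n) :
    Matrix (∀ s : {s : Fin n // s ≠ k}, Fin (d s)) (Fin (d k)) ℂ :=
  fun I j => a (insertAt k I j)

/-- An `n`-partite amplitude tensor is separable if it is a product of local vectors. -/
def Separable {n : ℕ} {d : Fin n → ℕ} (a : (∀ t : Fin n, Fin (d t)) → ℂ) : Prop :=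
  ∃ f : ∀ k : Fin n, Fin (d k) → ℂ, ∀ i, a i = ∏ k : Fin n, f k (i k)

/-- An `n`-partite amplitude tensor is normalized if the squared amplitudes sum to 1. -/
def Normalized {n : ℕ} {d : Fin n → ℕ} (a : (∀ t : Fin n, Fin (d t)) → ℂ) : Prop :=
  ∑ i : ∀ t : Fin n, Fin (d t), ‖a i‖ ^ 2 = 1

local notation "conj'" => starRingEnd ℂ

/-- If a matrix has rank-one product form and unit Frobenius norm, then `det (M Mᴴ - 1) = 0`. -/
lemma det_of_rank_one {α β : Type*} [Fintype α] [DecidableEq α] [Fintype β]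
    (M : Matrix α β ℂ) (g : α → ℂ) (f : β → ℂ) (hMr : ∀ I j, M I j = g I * f j)
    (h1 : ∑ I, ∑ j, M I j * conj' (M I j) = 1) :
    (M * Mᴴ - 1).det = 0 := by
  have hgf : (∑ I, g I * conj' (g I)) * (∑ j, f j * conj' (f j)) = 1 := by
    rw [Finset.sum_mul_sum, ← h1]
    exact Finset.sum_congr rfl fun I _ => Finset.sum_congr rfl fun j _ => by
      rw [hMr]; rw [_root_.map_mul]; ring
  have hg : ∃ I, g I ≠ 0 := by
    by_contra h
    push_neg at h
    rw [Finset.sum_eq_zero (fun I _ => by rw [h I]; ring), zero_mul] at hgf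
    exact zero_ne_one hgf
  obtain ⟨I0, hI0⟩ := hg
  have hBg : (M * Mᴴ) *ᵥ g = g := by
    funext I
    have : ((M * Mᴴ) *ᵥ g) I
        = g I * ((∑ I', g I' * conj' (g I')) * (∑ j, f j * conj' (f j))) := by
      simp only [Matrix.mulVec, Matrix.mul_apply, Matrix.conjTranspose_apply, dotProduct,
        Finset.sum_mul, Finset.mul_sum, hMr, _root_.map_mul]
      rw [Finset.sum_comm]
      exact Finset.sum_congr rfl fun I' _ => Finset.sum_congr rfl fun j _ => by
        simp only [starRingEnd_apply, star_mul']; ring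
    rw [this, hgf, mul_one]
  rw [← Matrix.exists_mulVec_eq_zero_iff]
  refine ⟨g, fun h => hI0 (congrFun h I0), ?_⟩
  rw [Matrix.sub_mulVec, Matrix.one_mulVec, hBg, sub_self]

/-- If `det (M Mᴴ - 1) = 0` and `M` has unit Frobenius norm, then `M` has rank-one form. -/
lemma rank_one_of_det {α β : Type*} [Fintype α] [DecidableEq α] [Fintype β]
    (M : Matrix α β ℂ)
    (h1 : ∑ I, ∑ j, M I j * conj' (M I j) = 1)
    (hdet : (M * Mᴴ - 1).det = 0) :
    ∃ (g : α → ℂ) (f : β → ℂ), ∀ I j, M I j = g I * f j := by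
  obtain ⟨y, hy0, hy⟩ := Matrix.exists_mulVec_eq_zero_iff.mpr hdet
  have hBy : (M * Mᴴ) *ᵥ y = y := by
    rw [Matrix.sub_mulVec, Matrix.one_mulVec, sub_eq_zero] at hy
    exact hy
  set c : ℝ := ∑ I, Complex.normSq (y I) with hc
  have hcpos : 0 < c := by
    obtain ⟨I, hI⟩ := Function.ne_iff.mp hy0
    exact Finset.sum_pos' (fun i _ => Complex.normSq_nonneg _)
      ⟨I, Finset.mem_univ I, by simpa [Complex.normSq_pos] using hI⟩
  set s : ℝ := (Real.sqrt c)⁻¹ with hs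
  set x : α → ℂ := (s : ℂ) • y with hxdef
  have hBx : (M * Mᴴ) *ᵥ x = x := by
    rw [hxdef, Matrix.mulVec_smul, hBy]
  have hxapp : ∀ I, x I = (s : ℂ) * y I := fun I => rfl
  have hxx : ∑ I, conj' (x I) * x I = 1 := by
    have hterm : ∀ I, conj' (x I) * x I
        = ((s * s : ℝ) : ℂ) * ((Complex.normSq (y I) : ℝ) : ℂ) := by
      intro I
      rw [hxapp, _root_.map_mul, Complex.conj_ofReal, ← Complex.mul_conj]
      push_cast
      ring
    rw [Finset.sum_congr rfl fun I _ => hterm I, ← Finset.mul_sum]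
    have hss : s * s = c⁻¹ := by
      rw [hs, ← mul_inv, Real.mul_self_sqrt hcpos.le]
    norm_cast
    rw [hss, ← hc, inv_mul_cancel₀ (ne_of_gt hcpos)]
  set w : β → ℂ := star x ᵥ* M with hw
  have hwapp : ∀ j, w j = ∑ I, conj' (x I) * M I j := fun j => rfl
  have hconjw : ∀ j, conj' (w j) = ∑ I, x I * conj' (M I j) := by
    intro j
    rw [hwapp]
    simp only [map_sum, _root_.map_mul, Complex.conj_conj]
  have hxx' : star x ⬝ᵥ x = 1 := hxx
  have hS : ∑ j, w j * conj' (w j) = 1 := by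
    have h0 : ∑ j, w j * conj' (w j) = w ⬝ᵥ star w := rfl
    rw [h0, hw, Matrix.star_vecMul, star_star, ← Matrix.dotProduct_mulVec,
      Matrix.mulVec_mulVec, hBx, hxx']
  have e2 : ∑ I, ∑ j, (conj' (x I) * M I j) * conj' (w j) = ∑ j, w j * conj' (w j) := by
    rw [Finset.sum_comm]
    refine Finset.sum_congr rfl fun j _ => ?_
    rw [← Finset.sum_mul, ← hwapp]
  have e3 : ∑ I, ∑ j, (x I * conj' (M I j)) * w j = ∑ j, w j * conj' (w j) := by
    rw [Finset.sum_comm]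
    refine Finset.sum_congr rfl fun j _ => ?_
    rw [← Finset.sum_mul, ← hconjw]
    ring
  have e4 : ∑ I, ∑ j, (conj' (x I) * x I) * (w j * conj' (w j))
      = (∑ I, conj' (x I) * x I) * (∑ j, w j * conj' (w j)) := by
    rw [Finset.sum_mul_sum]
  have expand : ∀ I j, (M I j - x I * w j) * conj' (M I j - x I * w j)
      = M I j * conj' (M I j) - (conj' (x I) * M I j) * conj' (w j)
        - (x I * conj' (M I j)) * w j + (conj' (x I) * x I) * (w j * conj' (w j)) := by
    intro I j
    simp only [map_sub, _root_.map_mul]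
    ring
  have main : ∑ I, ∑ j, (M I j - x I * w j) * conj' (M I j - x I * w j) = 0 := by
    simp only [expand, Finset.sum_sub_distrib, Finset.sum_add_distrib]
    rw [e2, e3, e4, h1, hxx, hS]
    ring
  have hzero : ∀ I j, M I j - x I * w j = 0 := by
    simp only [Complex.mul_conj] at main
    have main' : ∑ I, ∑ j, Complex.normSq (M I j - x I * w j) = 0 := by
      exact_mod_cast main
    intro I j
    have h1' := (Finset.sum_eq_zero_iff_of_nonneg
      (fun I _ => Finset.sum_nonneg fun j _ => Complex.normSq_nonneg _)).mp main'
      I (Finset.mem_univ I)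
    have h2' := (Finset.sum_eq_zero_iff_of_nonneg
      (fun j _ => Complex.normSq_nonneg _)).mp h1' j (Finset.mem_univ j)
    exact Complex.normSq_eq_zero.mp h2'
  exact ⟨x, w, fun I j => by have := hzero I j; rw [sub_eq_zero] at this; exact this⟩

variable {n : ℕ} {d : Fin n → ℕ}

lemma insertAt_apply_ne (k : Fin n) (I : ∀ s : {s : Fin n // s ≠ k}, Fin (d s)) (j : Fin (d k))
    (s : {s : Fin n // s ≠ k}) : insertAt k I j s.1 = I ⟨s.1, s.2⟩ := by
  rw [insertAt, dif_neg s.2]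

lemma insertAt_apply_eq (k : Fin n) (I : ∀ s : {s : Fin n // s ≠ k}, Fin (d s)) (j : Fin (d k)) :
    insertAt k I j k = j := by
  rw [insertAt, dif_pos rfl]
  rfl

lemma insertAt_restrict (k : Fin n) (i : ∀ t : Fin n, Fin (d t)) :
    insertAt k (fun s => i s.1) (i k) = i := by
  funext t
  by_cases h : t = k
  · subst h; exact insertAt_apply_eq t _ _
  · exact insertAt_apply_ne k _ _ ⟨t, h⟩

/-- The equivalence between full index tuples and (partial tuple, `k`-th index) pairs. -/
def partyEquiv (k : Fin n) :
    (∀ t : Fin n, Fin (d t)) ≃ (∀ s : {s : Fin n // s ≠ k}, Fin (d s.1)) × Fin (d k) where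
  toFun i := (fun s => i s.1, i k)
  invFun p := insertAt k p.1 p.2
  left_inv i := insertAt_restrict k i
  right_inv p := by
    obtain ⟨I, j⟩ := p
    refine Prod.ext ?_ ?_
    · funext s
      exact insertAt_apply_ne k I j s
    · exact insertAt_apply_eq k I j

lemma sum_insertAt {M : Type*} [AddCommMonoid M] (k : Fin n)
    (φ : (∀ t : Fin n, Fin (d t)) → M) :
    ∑ i, φ i = ∑ I, ∑ j, φ (insertAt k I j) := by
  rw [← Equiv.sum_comp (partyEquiv k).symm φ, Fintype.sum_prod_type]
  rfl

lemma prod_insertAt (k : Fin n) (f : ∀ t : Fin n, Fin (d t) → ℂ)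
    (I : ∀ s : {s : Fin n // s ≠ k}, Fin (d s)) (j : Fin (d k)) :
    ∏ t, f t (insertAt k I j t) = (∏ s : {s : Fin n // s ≠ k}, f s.1 (I s)) * f k j := by
  rw [← Finset.mul_prod_erase Finset.univ _ (Finset.mem_univ k), insertAt_apply_eq,
    Finset.prod_subtype (p := fun t => t ≠ k) (Finset.univ.erase k) (fun t => by simp)
      (fun t => f t (insertAt k I j t))]
  rw [mul_comm]
  congr 1
  refine Finset.prod_congr rfl fun s _ => ?_
  rw [insertAt_apply_ne]

lemma separable_of_splits (hn : 1 ≤ n) (a : (∀ t : Fin n, Fin (d t)) → ℂ)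
    (i₀ : ∀ t : Fin n, Fin (d t)) (h0 : a i₀ ≠ 0)
    (g : ∀ k : Fin n, (∀ s : {s : Fin n // s ≠ k}, Fin (d s.1)) → ℂ)
    (f : ∀ k : Fin n, Fin (d k) → ℂ)
    (h : ∀ k i, a i = g k (fun s => i s.1) * f k (i k)) :
    Separable a := by
  have key : ∀ i : ∀ t : Fin n, Fin (d t), ∀ m : ℕ, m ≤ n →
      a (fun t => if t.1 < m then i t else i₀ t)
        * ∏ k ∈ Finset.univ.filter (fun k : Fin n => k.1 < m), f k (i₀ k)
      = a i₀ * ∏ k ∈ Finset.univ.filter (fun k : Fin n => k.1 < m), f k (i k) := by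
    intro i m
    induction m with
    | zero =>
      intro _
      have : (fun t : Fin n => if t.1 < 0 then i t else i₀ t) = i₀ := by
        funext t; simp
      rw [this]
      simp
    | succ m ih =>
      intro hm1
      have hmn : m < n := hm1
      have ihm := ih (le_of_lt hmn)
      set km : Fin n := ⟨m, hmn⟩ with hkm
      have hfilter : Finset.univ.filter (fun k : Fin n => k.1 < m + 1)
          = insert km (Finset.univ.filter (fun k : Fin n => k.1 < m)) := by
        ext t
        simp only [Finset.mem_filter, Finset.mem_insert, Finset.mem_univ, true_and, hkm,
          Fin.ext_iff]
        omega
      have hnot : km ∉ Finset.univ.filter (fun k : Fin n => k.1 < m) := by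
        simp [hkm]
      set i1 : ∀ t : Fin n, Fin (d t) := fun t => if t.1 < m + 1 then i t else i₀ t with hi1
      set i2 : ∀ t : Fin n, Fin (d t) := fun t => if t.1 < m then i t else i₀ t with hi2
      have hstep : a i1 * f km (i₀ km) = a i2 * f km (i km) := by
        have hre : (fun s : {s : Fin n // s ≠ km} => i1 s.1)
            = (fun s : {s : Fin n // s ≠ km} => i2 s.1) := by
          funext s
          have hs : s.1.1 ≠ m := fun hc => s.2 (Fin.ext hc)
          simp only [hi1, hi2]
          split_ifs with h1 h2 h2 <;> first | rfl | omega
        have h1k : i1 km = i km := by simp [hi1, hkm]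
        have h2k : i2 km = i₀ km := by simp [hi2, hkm]
        rw [h km i1, h km i2, hre, h1k, h2k]
        ring
      rw [hfilter, Finset.prod_insert hnot, Finset.prod_insert hnot]
      calc a i1 * (f km (i₀ km) * ∏ k ∈ Finset.univ.filter (fun k : Fin n => k.1 < m), f k (i₀ k))
          = (a i1 * f km (i₀ km))
            * ∏ k ∈ Finset.univ.filter (fun k : Fin n => k.1 < m), f k (i₀ k) := by ring
        _ = (a i2 * f km (i km))
            * ∏ k ∈ Finset.univ.filter (fun k : Fin n => k.1 < m), f k (i₀ k) := by rw [hstep]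
        _ = f km (i km)
            * (a i2 * ∏ k ∈ Finset.univ.filter (fun k : Fin n => k.1 < m), f k (i₀ k)) := by ring
        _ = f km (i km)
            * (a i₀ * ∏ k ∈ Finset.univ.filter (fun k : Fin n => k.1 < m), f k (i k)) := by
              rw [ihm]
        _ = a i₀
            * (f km (i km) * ∏ k ∈ Finset.univ.filter (fun k : Fin n => k.1 < m), f k (i k)) := by
              ring
  have keyn : ∀ i : ∀ t : Fin n, Fin (d t),
      a i * ∏ k, f k (i₀ k) = a i₀ * ∏ k, f k (i k) := by
    intro i
    have hk := key i n le_rfl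
    have hall : Finset.univ.filter (fun k : Fin n => k.1 < n) = Finset.univ := by
      ext t; simp [t.2]
    have hid : (fun t : Fin n => if t.1 < n then i t else i₀ t) = i := by
      funext t; simp [t.2]
    rwa [hall, hid] at hk
  have hf0 : ∀ k, f k (i₀ k) ≠ 0 := by
    intro k hk
    exact h0 (by rw [h k i₀, hk, mul_zero])
  have hprod0 : (∏ k, f k (i₀ k)) ≠ 0 := Finset.prod_ne_zero_iff.mpr fun k _ => hf0 k
  set k₀ : Fin n := ⟨0, hn⟩ with hk₀
  refine ⟨fun k j => (if k = k₀ then a i₀ else 1) * (f k j / f k (i₀ k)), fun i => ?_⟩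
  rw [Finset.prod_mul_distrib]
  have hone : (∏ k : Fin n, if k = k₀ then a i₀ else 1) = a i₀ := by
    rw [Finset.prod_ite_eq' Finset.univ k₀ (fun _ => a i₀)]
    simp
  rw [hone]
  rw [Finset.prod_div_distrib, ← mul_div_assoc, eq_div_iff hprod0]
  exact keyn i

/-- Theorem 2: separability iff `det (M_k M_kᴴ - 1) = 0` for every party `k`. -/
theorem separable_iff_det {n : ℕ} (hn : 1 ≤ n) (d : Fin n → ℕ) (hd : ∀ k, 1 ≤ d k)
    (a : (∀ t : Fin n, Fin (d t)) → ℂ) (ha : Normalized a) :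
    Separable a ↔
      ∀ k : Fin n, Matrix.det (flatten a k * (flatten a k)ᴴ - 1) = 0 := by
  have hnorm : ∑ i : ∀ t : Fin n, Fin (d t), a i * conj' (a i) = 1 := by
    have hterm : ∀ i : ∀ t : Fin n, Fin (d t),
        a i * conj' (a i) = ((‖a i‖ ^ 2 : ℝ) : ℂ) := fun i => by
      rw [Complex.mul_conj, Complex.sq_norm]
    rw [Finset.sum_congr rfl fun i _ => hterm i]
    norm_cast
  have h1 : ∀ k : Fin n,
      ∑ I, ∑ j, flatten a k I j * conj' (flatten a k I j) = 1 := by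
    intro k
    simp only [flatten]
    rw [← sum_insertAt k (fun i => a i * conj' (a i))]
    exact hnorm
  constructor
  · rintro ⟨f, hf⟩ k
    refine det_of_rank_one (flatten a k)
      (fun I => ∏ s : {s : Fin n // s ≠ k}, f s.1 (I s)) (f k) ?_ (h1 k)
    intro I j
    show a (insertAt k I j) = _
    rw [hf, prod_insertAt]
  · intro hdet
    have hex : ∃ i₀, a i₀ ≠ 0 := by
      by_contra hc
      push_neg at hc
      rw [Finset.sum_eq_zero (fun i _ => by rw [hc i]; simp)] at hnorm
      exact zero_ne_one hnorm
    obtain ⟨i₀, hi₀⟩ := hex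
    choose g f hgf using fun k => rank_one_of_det (flatten a k) (h1 k) (hdet k)
    refine separable_of_splits hn a i₀ hi₀ g f fun k i => ?_
    have hk := hgf k (fun s => i s.1) (i k)
    have e : flatten a k (fun s => i s.1) (i k) = a i := by
      show a (insertAt k (fun s => i s.1) (i k)) = a i
      rw [insertAt_restrict]
    rwa [e] at hk
end
end

section
/- A normalized n-partite amplitude tensor a is separable if and only if for every party k the k-th flattening M_k has rank equal to 1. -/
open Matrix

noncomputable section

open Module in
private lemma myMinor {m p : Type*} [Fintype m] [Fintype p] (M : Matrix m p ℂ) (h : M.rank = 1)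
    (I I' : m) (j j' : p) : M I j * M I' j' = M I j' * M I' j := by
  rw [Matrix.rank_eq_finrank_span_cols] at h
  obtain ⟨v, -, hv⟩ := (finrank_eq_one_iff').mp h
  have hcol : ∀ j : p, ∃ c : ℂ, ∀ I, M I j = c * (v : m → ℂ) I := by
    intro j
    obtain ⟨c, hc⟩ := hv ⟨Mᵀ j, Submodule.subset_span (Set.mem_range_self j)⟩
    refine ⟨c, fun I => ?_⟩
    have := congrArg (fun w : Submodule.span ℂ (Set.range Mᵀ) => (w : m → ℂ) I) hc
    simpa [Matrix.transpose_apply] using this.symm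
  obtain ⟨c, hc⟩ := hcol j
  obtain ⟨c', hc'⟩ := hcol j'
  rw [hc, hc', hc, hc']
  ring

open Module in
private lemma myOuter {m p : Type*} [Fintype m] [Fintype p]
    (M : Matrix m p ℂ) (g : m → ℂ) (f : p → ℂ)
    (hM : ∀ I j, M I j = g I * f j) (hne : ∃ I j, M I j ≠ 0) : M.rank = 1 := by
  have hle : M.rank ≤ 1 := by
    rw [Matrix.rank_eq_finrank_span_cols]
    have hsub : Submodule.span ℂ (Set.range Mᵀ) ≤ Submodule.span ℂ {g} := by
      rw [Submodule.span_le]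
      rintro _ ⟨j, rfl⟩
      have : Mᵀ j = f j • g := by funext I; simp [hM, mul_comm]
      rw [this]
      exact Submodule.smul_mem _ _ (Submodule.mem_span_singleton_self g)
    refine le_trans (Submodule.finrank_mono hsub) ?_
    by_cases hg : g = 0
    · subst hg
      rw [Submodule.span_zero_singleton]
      simp
    · exact le_of_eq (finrank_span_singleton hg)
  have hne0 : M.rank ≠ 0 := by
    obtain ⟨I, j, hIj⟩ := hne
    rw [Matrix.rank_eq_finrank_span_cols]
    intro h0
    have : Submodule.span ℂ (Set.range Mᵀ) = ⊥ := Submodule.finrank_eq_zero.mp h0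
    have hmem : Mᵀ j ∈ Submodule.span ℂ (Set.range Mᵀ) :=
      Submodule.subset_span (Set.mem_range_self j)
    rw [this, Submodule.mem_bot] at hmem
    exact hIj (by have := congrFun hmem I; simpa using this)
  omega

private lemma insertAt_eq_update {n : ℕ} {d : Fin n → ℕ} (k : Fin n)
    (u : ∀ t, Fin (d t)) (j : Fin (d k)) :
    insertAt k (fun s => u s.1) j = Function.update u k j := by
  funext t
  by_cases h : t = k
  · subst h
    simp [insertAt, Fin.ext_iff]
  · simp [insertAt, h, Function.update_of_ne h]

private lemma flatten_outer {n : ℕ} {d : Fin n → ℕ} (a : (∀ t : Fin n, Fin (d t)) → ℂ)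
    (k : Fin n)
    (f : ∀ k : Fin n, Fin (d k) → ℂ) (hf : ∀ i, a i = ∏ k : Fin n, f k (i k))
    (I : ∀ s : {s : Fin n // s ≠ k}, Fin (d s)) (j : Fin (d k)) :
    flatten a k I j = (∏ s : {s : Fin n // s ≠ k}, f s (I s)) * f k j := by
  rw [flatten, hf]
  rw [← Finset.mul_prod_erase Finset.univ _ (Finset.mem_univ k)]
  have h1 : insertAt k I j k = j := by simp [insertAt, Fin.ext_iff]
  rw [h1, mul_comm]
  congr 1
  have h2 : ∀ s : {s : Fin n // s ≠ k}, f s (I s) = f s (insertAt k I j s) := by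
    intro s
    congr 1
    simp [insertAt, s.2]
  rw [Finset.prod_congr rfl (fun s _ => h2 s)]
  rw [← Finset.prod_subtype (Finset.univ.erase k)
      (fun t => by simp [Finset.mem_erase] : ∀ t, t ∈ Finset.univ.erase k ↔ t ≠ k)
      (fun t => f t (insertAt k I j t))]

/-- Theorem 3: separability iff every flattening `M_k` has rank 1. -/
theorem separable_iff_rank_one {n : ℕ} (hn : 1 ≤ n) (d : Fin n → ℕ) (hd : ∀ k, 1 ≤ d k)
    (a : (∀ t : Fin n, Fin (d t)) → ℂ) (ha : Normalized a) :
    Separable a ↔ ∀ k : Fin n, (flatten a k).rank = 1 := by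
  have hane : ∃ i, a i ≠ 0 := by
    by_contra h
    push_neg at h
    rw [Normalized] at ha
    simp [h] at ha
  constructor
  · rintro ⟨f, hf⟩ k
    refine myOuter _ (fun I => ∏ s : {s : Fin n // s ≠ k}, f s (I s)) (f k)
      (fun I j => flatten_outer a k f hf I j) ?_
    obtain ⟨i, hi⟩ := hane
    exact ⟨fun s => i s.1, i k, by
      rw [flatten, insertAt_eq_update, Function.update_eq_self]; exact hi⟩
  · intro hr
    obtain ⟨i0, h0⟩ := hane
    have key : ∀ (k : Fin n) (u v : ∀ t, Fin (d t)),
        a u * a v = a (Function.update u k (v k)) * a (Function.update v k (u k)) := by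
      intro k u v
      have hm := myMinor _ (hr k) (fun s => u s.1) (fun s => v s.1) (u k) (v k)
      simpa only [flatten, insertAt_eq_update, Function.update_eq_self] using hm
    set c := a i0 with hc
    refine ⟨fun k j => if (k : ℕ) = 0 then a (Function.update i0 k j)
      else a (Function.update i0 k j) / c, ?_⟩
    intro i
    set g : Fin n → ℂ := fun k => a (Function.update i0 k (i k)) with hg
    -- the interpolating family
    set w : ℕ → ∀ t : Fin n, Fin (d t) :=
      fun m t => if (t : ℕ) < m then i t else i0 t with hw
    have main : ∀ m, m ≤ n → a (w m) * c ^ m =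
        c * ∏ k ∈ Finset.univ.filter (fun k : Fin n => (k : ℕ) < m), g k := by
      intro m
      induction m with
      | zero =>
        intro _
        have hw0 : w 0 = i0 := by funext t; simp [hw]
        simp [hw0, hc]
      | succ m ih =>
        intro hm1
        have hmn : m < n := hm1
        have ihm := ih (le_of_lt hmn)
        set km : Fin n := ⟨m, hmn⟩ with hkm
        have step : a (w m) * g km = a (w (m + 1)) * c := by
          have hk := key km (w m) (Function.update i0 km (i km))
          have e1 : Function.update (w m) km (Function.update i0 km (i km) km) = w (m + 1) := by
            rw [Function.update_self]
            funext t
            by_cases h : t = km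
            · subst h
              simp [hw, hkm]
            · have htm : (t : ℕ) ≠ m := by
                simpa [hkm, Fin.ext_iff] using h
              rw [Function.update_of_ne h]
              simp only [hw]
              have : (t : ℕ) < m + 1 ↔ (t : ℕ) < m := by omega
              simp [this]
          have e2 : Function.update (Function.update i0 km (i km)) km (w m km) = i0 := by
            rw [Function.update_idem]
            have : w m km = i0 km := by simp [hw, hkm]
            rw [this, Function.update_eq_self]
          rw [e1, e2] at hk
          simpa [hg, hc, mul_comm] using hk
        have hfilter : Finset.univ.filter (fun k : Fin n => (k : ℕ) < m + 1) =
            insert km (Finset.univ.filter (fun k : Fin n => (k : ℕ) < m)) := by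
          ext t
          simp only [Finset.mem_filter, Finset.mem_insert, Finset.mem_univ, true_and,
            hkm, Fin.ext_iff]
          omega
        have hnotmem : km ∉ Finset.univ.filter (fun k : Fin n => (k : ℕ) < m) := by
          simp [hkm]
        rw [hfilter, Finset.prod_insert hnotmem]
        calc a (w (m + 1)) * c ^ (m + 1)
            = (a (w (m + 1)) * c) * c ^ m := by ring
          _ = (a (w m) * g km) * c ^ m := by rw [step]
          _ = (a (w m) * c ^ m) * g km := by ring
          _ = (c * ∏ k ∈ Finset.univ.filter (fun k : Fin n => (k : ℕ) < m), g k) * g km := by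
              rw [ihm]
          _ = c * (g km * ∏ k ∈ Finset.univ.filter (fun k : Fin n => (k : ℕ) < m), g k) := by
              ring
    have hwn : w n = i := by
      funext t
      simp [hw, t.isLt]
    have hfn : Finset.univ.filter (fun k : Fin n => (k : ℕ) < n) = Finset.univ := by
      ext t
      simp [t.isLt]
    have hmain := main n (le_refl n)
    rw [hwn, hfn] at hmain
    -- now conclude
    set k0 : Fin n := ⟨0, hn⟩ with hk0
    have hck : ∀ k : Fin n, ((k : ℕ) = 0) ↔ k = k0 := by
      intro k
      simp [hk0, Fin.ext_iff]
    have hprod : (∏ k : Fin n, (if (k : ℕ) = 0 then a (Function.update i0 k (i k))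
        else a (Function.update i0 k (i k)) / c)) * c ^ (n - 1) = ∏ k : Fin n, g k := by
      rw [← Finset.mul_prod_erase Finset.univ _ (Finset.mem_univ k0),
        ← Finset.mul_prod_erase Finset.univ g (Finset.mem_univ k0)]
      have hcard : (Finset.univ.erase k0).card = n - 1 := by
        rw [Finset.card_erase_of_mem (Finset.mem_univ k0)]
        simp
      rw [if_pos (by simp [hk0])]
      have : c ^ (n - 1) = ∏ _k ∈ Finset.univ.erase k0, c := by
        rw [Finset.prod_const, hcard]
      rw [this, mul_assoc, ← Finset.prod_mul_distrib]
      congr 1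
      refine Finset.prod_congr rfl fun t ht => ?_
      have htk : t ≠ k0 := (Finset.mem_erase.mp ht).1
      rw [if_neg (by rw [hck]; exact htk)]
      rw [div_mul_cancel₀]
      exact h0
    have hcn : c ^ n = c ^ (n - 1) * c := by
      conv_lhs => rw [show n = (n - 1) + 1 by omega]
      rw [pow_succ]
    have hpow : c ^ (n - 1) * c ≠ 0 := by
      exact mul_ne_zero (pow_ne_zero _ h0) h0
    apply mul_right_cancel₀ hpow
    calc a i * (c ^ (n - 1) * c)
        = a i * c ^ n := by rw [hcn]
      _ = c * ∏ k : Fin n, g k := hmain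
      _ = c * ((∏ k : Fin n, (if (k : ℕ) = 0 then a (Function.update i0 k (i k))
            else a (Function.update i0 k (i k)) / c)) * c ^ (n - 1)) := by rw [hprod]
      _ = (∏ k : Fin n, (if (k : ℕ) = 0 then a (Function.update i0 k (i k))
            else a (Function.update i0 k (i k)) / c)) * (c ^ (n - 1) * c) := by ring
end
end

section
/- Let M be a complex square matrix over a nonempty finite index type that is Hermitian, positive semidefinite, and has trace 1. Then M has rank 1 if and only if det(M − 1) = 0, where 1 denotes the identity matrix. -/
open Matrix
open scoped ComplexOrder

/-- A Hermitian positive semidefinite complex matrix of trace 1 has rank 1 iff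
`det (M - 1) = 0`. -/
theorem rank_one_iff_det_sub_one {m : Type*} [Fintype m] [DecidableEq m] [Nonempty m]
    (M : Matrix m m ℂ) (hherm : Mᴴ = M) (hpsd : M.PosSemidef) (htr : M.trace = 1) :
    M.rank = 1 ↔ Matrix.det (M - 1) = 0 := by
  have hA := hpsd.1
  have hspec := hA.spectral_theorem
  rw [Unitary.conjStarAlgAut_apply] at hspec
  set V : Matrix m m ℂ := (hA.eigenvectorUnitary : Matrix m m ℂ) with hV
  have hV1 : V * star V = 1 := Matrix.mem_unitaryGroup_iff.mp hA.eigenvectorUnitary.2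
  have hV2 : star V * V = 1 := Matrix.mem_unitaryGroup_iff'.mp hA.eigenvectorUnitary.2
  -- trace = sum of eigenvalues
  have htrace : (∑ i, (hA.eigenvalues i : ℂ)) = 1 := by
    rw [← htr]
    conv_rhs => rw [hspec]
    rw [Matrix.trace_mul_cycle, hV2, Matrix.one_mul, Matrix.trace_diagonal]
    rfl
  have hsum : (∑ i, hA.eigenvalues i) = 1 := by
    have := htrace
    push_cast at this
    exact_mod_cast this
  -- det (M - 1) = ∏ (λ i - 1)
  have hdet : Matrix.det (M - 1) = ∏ i, ((hA.eigenvalues i : ℂ) - 1) := by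
    have h1 : M - 1 = V * (diagonal (fun i => (hA.eigenvalues i : ℂ) - 1)) * star V := by
      calc M - 1 = V * diagonal ((↑) ∘ hA.eigenvalues) * star V - V * 1 * star V := by
            rw [Matrix.mul_one, hV1]
            congr 1
        _ = _ := by
          rw [← Matrix.sub_mul, ← Matrix.mul_sub]
          congr 1
          congr 1
          rw [← Matrix.diagonal_one, Matrix.diagonal_sub]
          rfl
    rw [h1, Matrix.det_mul_right_comm, hV1, Matrix.one_mul, Matrix.det_diagonal]
  have hnn : ∀ i, 0 ≤ hA.eigenvalues i := fun i => hpsd.eigenvalues_nonneg i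
  rw [hdet, Finset.prod_eq_zero_iff]
  constructor
  · intro hr
    rw [hA.rank_eq_card_non_zero_eigs, Fintype.card_eq_one_iff] at hr
    obtain ⟨⟨i, hi⟩, huniq⟩ := hr
    have hzero : ∀ j, j ≠ i → hA.eigenvalues j = 0 := by
      intro j hj
      by_contra h
      exact hj (congrArg Subtype.val (huniq ⟨j, h⟩))
    have : hA.eigenvalues i = 1 := by
      rw [← hsum, Finset.sum_eq_single i (fun j _ hj => hzero j hj) (by simp)]
    exact ⟨i, Finset.mem_univ i, by rw [this]; simp⟩
  · rintro ⟨i, -, hi⟩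
    have hi1 : hA.eigenvalues i = 1 := by
      have : (hA.eigenvalues i : ℂ) = 1 := by linear_combination hi
      exact_mod_cast this
    have hzero : ∀ j, j ≠ i → hA.eigenvalues j = 0 := by
      have hrest : ∑ j ∈ Finset.univ.erase i, hA.eigenvalues j = 0 := by
        have := Finset.add_sum_erase Finset.univ hA.eigenvalues (Finset.mem_univ i)
        rw [hsum, hi1] at this
        linarith
      intro j hj
      have := (Finset.sum_eq_zero_iff_of_nonneg (fun k _ => hnn k)).mp hrest j
        (Finset.mem_erase.mpr ⟨hj, Finset.mem_univ j⟩)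
      exact this
    rw [hA.rank_eq_card_non_zero_eigs, Fintype.card_eq_one_iff]
    refine ⟨⟨i, by rw [hi1]; norm_num⟩, ?_⟩
    rintro ⟨j, hj⟩
    ext
    by_contra h
    exact hj (hzero j h)
end
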